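/- Let (Θ, 𝔉, μ) be a measure space, Ω a set, Γ a set, and λ : Ω × Γ → [0,∞) a loss function. Let f : [0,∞) → (0,1] be a weighting profile with inverse g : (0,1] → [0,∞). Fix outcomes ω_1,…,ω_T ∈ Ω and maps ξ_1,…,ξ_T : Θ → Γ such that θ ↦ λ(ω, ξ_t(θ)) is measurable for every ω and t. Let P_0 : Θ → [0,∞) be a measurable prior density with ∫_Θ P_0 dμ = 1, define the weights P_t(θ) = f(λ(ω_t, ξ_t(θ)))·P_{t−1}(θ) for t = 1,…,T, the normalized weights P*_{t−1}(θ) = P_{t−1}(θ)/∫_Θ P_{t−1} dμ, and the pseudo-prediction losses ψ_t(ω_t) = g(∫_Θ f(λ(ω_t, ξ_t(θ))) P*_{t−1}(θ) dμ(θ)). Then g(∏_{t=1}^T f(ψ_t(ω_t))) = g(∫_Θ f(A_T(θ)) P_0(θ) dμ(θ)), where A_T(θ) = g(∏_{t=1}^T f(λ(ω_t, ξ_t(θ)))) is the quasi-sum aggregated loss of expert θ; equivalently, ∫_Θ ∏_{t=1}^T f(λ(ω_t, ξ_t(θ))) P_0(θ) dμ(θ) = ∏_{t=1}^T f(ψ_t(ω_t)).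 -/

import Mathlib

open MeasureTheory

/-- **Bound for APA loss (exact identity, Lemma `lemma-APA`).**
For a weighting profile `f` with inverse `g`, prior density `P0`, AA weight updates
`P_t θ = f (λ(ω_t, ξ_t θ)) · P_{t-1} θ` and pseudo-prediction losses
`ψ_t = g (∫ f (λ(ω_t, ξ_t θ)) P*_{t-1} θ dμ)`, the quasi-sum aggregated loss of the
APA equals `g (∫ f (A_T θ) P0 θ dμ)`, where `A_T θ = g (∏_t f (λ(ω_t, ξ_t θ)))`;
equivalently `∫ ∏_t f (λ(ω_t, ξ_t θ)) P0 θ dμ = ∏_t f (ψ_t)`. -/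
theorem stmt_3
    {Θ Ω Γ : Type*} [MeasurableSpace Θ] (μ : Measure Θ)
    (lam : Ω → Γ → ℝ) (hlam_nonneg : ∀ (w : Ω) (γ : Γ), 0 ≤ lam w γ)
    -- weighting profile f with inverse g
    (f g : ℝ → ℝ)
    (hf_cont : ContinuousOn f (Set.Ici (0 : ℝ)))
    (hf_anti : StrictAntiOn f (Set.Ici (0 : ℝ)))
    (hf0 : f 0 = 1)
    (hf_mem : ∀ x : ℝ, 0 ≤ x → f x ∈ Set.Ioc (0 : ℝ) 1)
    (hf_lim : Filter.Tendsto f Filter.atTop (nhds 0))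
    (hg_left : ∀ x : ℝ, 0 ≤ x → g (f x) = x)
    (hg_right : ∀ y ∈ Set.Ioc (0 : ℝ) 1, f (g y) = y)
    (hg_nonneg : ∀ y ∈ Set.Ioc (0 : ℝ) 1, 0 ≤ g y)
    -- outcomes and expert predictions
    (T : ℕ) (ω : Fin T → Ω) (ξ : Fin T → Θ → Γ)
    (hmeas : ∀ (t : Fin T) (w : Ω), Measurable fun θ => lam w (ξ t θ))
    -- prior density
    (P0 : Θ → ℝ) (hP0_meas : Measurable P0) (hP0_nonneg : ∀ θ, 0 ≤ P0 θ)
    (hP0_int : Integrable P0 μ) (hP0_one : (∫ θ, P0 θ ∂μ) = 1)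
    -- weight updates
    (P : ℕ → Θ → ℝ)
    (hP_init : P 0 = P0)
    (hP_step : ∀ (t : Fin T) (θ : Θ),
      P ((t : ℕ) + 1) θ = f (lam (ω t) (ξ t θ)) * P (t : ℕ) θ)
    -- pseudo-prediction losses (using the normalized weights P*_{t-1})
    (ψ : Fin T → ℝ)
    (hψ : ∀ t : Fin T, ψ t =
      g (∫ θ, f (lam (ω t) (ξ t θ)) * (P (t : ℕ) θ / ∫ θ', P (t : ℕ) θ' ∂μ) ∂μ)) :
    g (∏ t, f (ψ t)) = g (∫ θ, f (g (∏ t, f (lam (ω t) (ξ t θ)))) * P0 θ ∂μ) ∧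
    (∫ θ, (∏ t, f (lam (ω t) (ξ t θ))) * P0 θ ∂μ) = ∏ t, f (ψ t) := by
  have hfpos : ∀ x, 0 ≤ x → 0 < f x := fun x hx => (hf_mem x hx).1
  have hfle : ∀ x, 0 ≤ x → f x ≤ 1 := fun x hx => (hf_mem x hx).2
  have hmeasf : ∀ t : Fin T, Measurable fun θ => f (lam (ω t) (ξ t θ)) := by
    intro t
    have h1 : Measurable fun θ => (⟨lam (ω t) (ξ t θ), hlam_nonneg _ _⟩ : Set.Ici (0 : ℝ)) :=
      (hmeas t (ω t)).subtype_mk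
    exact (continuousOn_iff_continuous_restrict.mp hf_cont).measurable.comp h1
  have key : ∀ n, n ≤ T →
      (∀ θ, P n θ = (∏ s ∈ Finset.univ.filter (fun s : Fin T => (s : ℕ) < n),
          f (lam (ω s) (ξ s θ))) * P0 θ) ∧
      Integrable (P n) μ ∧
      0 < (∫ θ, P n θ ∂μ) ∧
      (∫ θ, P n θ ∂μ) =
        ∏ s ∈ Finset.univ.filter (fun s : Fin T => (s : ℕ) < n), f (ψ s) := by
    intro n
    induction n with
    | zero =>
      intro _
      refine ⟨fun θ => by simp [hP_init], by simpa [hP_init] using hP0_int, ?_, ?_⟩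
      · simp only [hP_init, hP0_one]; norm_num
      · simp [hP_init, hP0_one]
    | succ n ih =>
      intro hn1
      have hnT : n < T := hn1
      obtain ⟨hform, hint, hpos, hval⟩ := ih (le_of_lt hnT)
      set t : Fin T := ⟨n, hnT⟩ with ht
      have htval : (t : ℕ) = n := rfl
      have hPn_meas : Measurable (P n) := by
        rw [funext hform]
        exact (Finset.measurable_prod _ fun s _ => hmeasf s).mul hP0_meas
      have hPn_nonneg : ∀ θ, 0 ≤ P n θ := by
        intro θ
        rw [hform θ]
        exact mul_nonneg (Finset.prod_nonneg fun s _ =>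
          (hfpos _ (hlam_nonneg _ _)).le) (hP0_nonneg θ)
      have hstep : ∀ θ, P (n + 1) θ = f (lam (ω t) (ξ t θ)) * P n θ := fun θ => hP_step t θ
      have hI_int : Integrable (fun θ => f (lam (ω t) (ξ t θ)) * P n θ) μ := by
        refine hint.mono ((hmeasf t).mul hPn_meas).aestronglyMeasurable
          (Filter.Eventually.of_forall fun θ => ?_)
        have h1 : 0 < f (lam (ω t) (ξ t θ)) := hfpos _ (hlam_nonneg _ _)
        have h2 : f (lam (ω t) (ξ t θ)) ≤ 1 := hfle _ (hlam_nonneg _ _)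
        rw [Real.norm_eq_abs, Real.norm_eq_abs, abs_of_nonneg (mul_nonneg h1.le (hPn_nonneg θ)), abs_of_nonneg (hPn_nonneg θ)]
        calc f (lam (ω t) (ξ t θ)) * P n θ ≤ 1 * P n θ :=
              mul_le_mul_of_nonneg_right h2 (hPn_nonneg θ)
          _ = P n θ := one_mul _
      set I : ℝ := ∫ θ, f (lam (ω t) (ξ t θ)) * P n θ ∂μ with hI
      set c : ℝ := ∫ θ, P n θ ∂μ with hc
      have hI_le : I ≤ c := by
        refine integral_mono hI_int hint fun θ => ?_
        calc f (lam (ω t) (ξ t θ)) * P n θ ≤ 1 * P n θ :=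
              mul_le_mul_of_nonneg_right (hfle _ (hlam_nonneg _ _)) (hPn_nonneg θ)
          _ = P n θ := one_mul _
      have hI_nonneg : 0 ≤ I :=
        integral_nonneg fun θ => mul_nonneg (hfpos _ (hlam_nonneg _ _)).le (hPn_nonneg θ)
      have hI_pos : 0 < I := by
        rcases lt_or_eq_of_le hI_nonneg with h | h
        · exact h
        · exfalso
          have hzero : (fun θ => f (lam (ω t) (ξ t θ)) * P n θ) =ᵐ[μ] 0 := by
            rw [← integral_eq_zero_iff_of_nonneg
              (fun θ => mul_nonneg (hfpos _ (hlam_nonneg _ _)).le (hPn_nonneg θ)) hI_int]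
            exact h.symm
          have hPzero : P n =ᵐ[μ] 0 := by
            filter_upwards [hzero] with θ hθ
            have hfne : f (lam (ω t) (ξ t θ)) ≠ 0 := (hfpos _ (hlam_nonneg _ _)).ne'
            simpa [hfne] using hθ
          have : c = 0 := by
            rw [hc, integral_congr_ae hPzero]
            simp
          exact hpos.ne' this
      -- ψ value
      have hψt : f (ψ t) = I / c := by
        have hmem : I / c ∈ Set.Ioc (0 : ℝ) 1 :=
          ⟨div_pos hI_pos hpos, (div_le_one hpos).mpr hI_le⟩
        have hint_eq : (∫ θ, f (lam (ω t) (ξ t θ)) * (P n θ / c) ∂μ) = I / c := by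
          have : (fun θ => f (lam (ω t) (ξ t θ)) * (P n θ / c))
              = fun θ => (f (lam (ω t) (ξ t θ)) * P n θ) / c := by
            funext θ; ring
          rw [this, integral_div]
        rw [hψ t, htval, ← hc, hint_eq, hg_right _ hmem]
      have hins : Finset.univ.filter (fun s : Fin T => (s : ℕ) < n + 1)
          = insert t (Finset.univ.filter (fun s : Fin T => (s : ℕ) < n)) := by
        ext s
        simp only [Finset.mem_filter, Finset.mem_univ, true_and, Finset.mem_insert,
          Fin.ext_iff, htval]
        omega
      have htnot : t ∉ Finset.univ.filter (fun s : Fin T => (s : ℕ) < n) := by simp; exact htval.ge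
      have hintegral : (∫ θ, P (n + 1) θ ∂μ) = I := by
        rw [hI]
        exact integral_congr_ae (Filter.Eventually.of_forall hstep)
      refine ⟨?_, ?_, ?_, ?_⟩
      · intro θ
        rw [hstep θ, hform θ, hins, Finset.prod_insert htnot]
        ring
      · refine hI_int.congr (Filter.Eventually.of_forall fun θ => (hstep θ).symm)
      · rw [hintegral]; exact hI_pos
      · rw [hintegral, hins, Finset.prod_insert htnot, hψt, ← hval]
        field_simp
  obtain ⟨hform, hint, hpos, hval⟩ := key T le_rfl
  have hfilter : Finset.univ.filter (fun s : Fin T => (s : ℕ) < T) = Finset.univ := by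
    ext s; simp [s.isLt]
  rw [hfilter] at hform hval
  have hconc2 : (∫ θ, (∏ s, f (lam (ω s) (ξ s θ))) * P0 θ ∂μ) = ∏ s, f (ψ s) := by
    rw [← hval]
    exact integral_congr_ae (Filter.Eventually.of_forall fun θ => (hform θ).symm)
  refine ⟨?_, hconc2⟩
  have hprod_mem : ∀ θ, (∏ s, f (lam (ω s) (ξ s θ))) ∈ Set.Ioc (0 : ℝ) 1 :=
    fun θ => ⟨Finset.prod_pos fun s _ => hfpos _ (hlam_nonneg _ _),
      Finset.prod_le_one (fun s _ => (hfpos _ (hlam_nonneg _ _)).le)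
        (fun s _ => hfle _ (hlam_nonneg _ _))⟩
  have : (∫ θ, f (g (∏ s, f (lam (ω s) (ξ s θ)))) * P0 θ ∂μ)
      = ∫ θ, (∏ s, f (lam (ω s) (ξ s θ))) * P0 θ ∂μ := by
    refine integral_congr_ae (Filter.Eventually.of_forall fun θ => ?_)
    simp only [hg_right _ (hprod_mem θ)]
  rw [this, hconc2]
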